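/- arXiv:1312.3553 — 4 statements merged into one kernel-verified Lean document; each statement's English description precedes it below -/
import Mathlib

section
/- For integers k ≥ 2 and n ≥ 2k-2, F(k,n) = ∑_{i=0}^{k-1} F(k, n-(k-1)-i). -/
def genFib (k n : ℕ) : ℕ :=
  if h1 : n < k then n + 1
  else if h2 : k = 0 then 0
  else genFib k (n - 1) + genFib k (n - k)
  termination_by n
  decreasing_by all_goals omega

def genLucas (k n : ℕ) : ℕ :=
  if n < 2 * k then n + 1
  else (k - 1) * genFib k (n - (2 * k - 1)) + genFib k (n - (k - 1))

lemma genFib_rec (k n : ℕ) (hk : 1 ≤ k) (hn : k ≤ n) :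
    genFib k n = genFib k (n - 1) + genFib k (n - k) := by
  rw [genFib]
  rw [dif_neg (by omega), dif_neg (by omega)]

lemma genFib_telescope (k n j : ℕ) (hk : 1 ≤ k) (h : j + k ≤ n + 1) :
    genFib k n = genFib k (n - j) + ∑ i ∈ Finset.range j, genFib k (n - i - k) := by
  induction j with
  | zero => simp
  | succ j ih =>
    rw [ih (by omega), Finset.sum_range_succ]
    have h1 : genFib k (n - j) = genFib k (n - j - 1) + genFib k (n - j - k) :=
      genFib_rec k (n - j) hk (by omega)
    have h2 : n - j - 1 = n - (j + 1) := by omega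
    rw [h1, h2]
    ring

theorem stmt3 (k n : ℕ) (hk : 2 ≤ k) (hn : 2 * k - 2 ≤ n) :
    genFib k n = ∑ i ∈ Finset.range k, genFib k (n - (k - 1) - i) := by
  obtain ⟨m, rfl⟩ : ∃ m, k = m + 1 := ⟨k - 1, by omega⟩
  rw [Finset.sum_range_succ']
  have h := genFib_telescope (m + 1) n m (by omega) (by omega)
  rw [h]
  have : n - (m + 1 - 1) - 0 = n - m := by omega
  rw [this]
  rw [add_comm]
  congr 1
  apply Finset.sum_congr rfl
  intro i hi
  simp only [Finset.mem_range] at hi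
  congr 1
  omega
end

section
/- For integers k ≥ 2 and n ≥ 2k-1, F(k,n) = F(k,n-1) + F(k,n-2) - ∑_{i=0}^{k-3} F(k, n-(2k-1)+i). -/
lemma genFib_tele (k m : ℕ) (hk : 1 ≤ k) (hm : k ≤ m + 1) : ∀ d : ℕ,
    genFib k (m + d) = genFib k m + ∑ i ∈ Finset.range d, genFib k (m + 1 + i - k) := by
  intro d
  induction d with
  | zero => simp
  | succ d ih =>
    have h := genFib_rec k (m + d + 1) hk (by omega)
    rw [show m + (d + 1) = m + d + 1 from rfl, h, Nat.add_sub_cancel, ih,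
      Finset.sum_range_succ, show m + d + 1 = m + 1 + d by omega]
    omega

theorem stmt4 (k n : ℕ) (hk : 2 ≤ k) (hn : 2 * k - 1 ≤ n) :
    (genFib k n : ℤ) = (genFib k (n - 1) : ℤ) + (genFib k (n - 2) : ℤ)
      - ∑ i ∈ Finset.range (k - 2), (genFib k (n - (2 * k - 1) + i) : ℤ) := by
  have h1 := genFib_rec k n (by omega) (by omega)
  have h2 := genFib_tele k (n - k) (by omega) (by omega) (k - 2)
  rw [show n - k + (k - 2) = n - 2 by omega] at h2
  have h3 : ∑ i ∈ Finset.range (k - 2), genFib k (n - k + 1 + i - k)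
      = ∑ i ∈ Finset.range (k - 2), genFib k (n - (2 * k - 1) + i) := by
    apply Finset.sum_congr rfl
    intro i _
    congr 1
    omega
  rw [h3] at h2
  rw [h1, h2]
  push_cast
  ring
end

section
/- For integers k ≥ 2 and n ≥ 2k, L(k,n) = k·F(k, n-(2k-1)) + F(k, n-k). -/
theorem stmt6 (k n : ℕ) (hk : 2 ≤ k) (hn : 2 * k ≤ n) :
    genLucas k n = k * genFib k (n - (2 * k - 1)) + genFib k (n - k) := by
  rw [genLucas, if_neg (by omega)]
  have h : genFib k (n - (k - 1)) =
      genFib k (n - (k - 1) - 1) + genFib k (n - (k - 1) - k) := by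
    rw [genFib]
    rw [dif_neg (by omega), dif_neg (by omega)]
  have e1 : n - (k - 1) - 1 = n - k := by omega
  have e2 : n - (k - 1) - k = n - (2 * k - 1) := by omega
  rw [h, e1, e2]
  set F := genFib k (n - (2 * k - 1)) with hF
  have : k * F = (k - 1) * F + F := by
    rw [Nat.sub_one_mul, Nat.sub_add_cancel (Nat.le_mul_of_pos_left F (by omega))]
  rw [this]; ring
end

section
/- For integers k ≥ 2 and n ≥ 0, F(k,n) equals the number of tilings of a 1×(n+1) board using 1×1 white squares, 1×1 black squares, and 1×k gray rectangles such that there is exactly one black square and it appears in one of the first k positions. -/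
inductive Piece
  | white
  | black
  | gray
  deriving DecidableEq

def pieceLen (k : ℕ) : Piece → ℕ
  | .white => 1
  | .black => 1
  | .gray => k

namespace Stmt13Aux

instance : Fintype Piece :=
  ⟨{.white, .black, .gray}, fun x => by cases x <;> simp⟩

abbrev P (k n : ℕ) (l : List Piece) : Prop :=
  (l.map (pieceLen k)).sum = n + 1 ∧
  l.count Piece.black = 1 ∧
  ∃ l₁ l₂, l = l₁ ++ Piece.black :: l₂ ∧ (l₁.map (pieceLen k)).sum < k

lemma length_le_sum (k : ℕ) (hk : 1 ≤ k) (l : List Piece) :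
    l.length ≤ (l.map (pieceLen k)).sum := by
  induction l with
  | nil => simp
  | cons a t ih => cases a <;> simp [pieceLen] <;> omega

instance finiteP (k n : ℕ) [NeZero k] : Finite {l : List Piece // P k n l} := by
  have hsub : {l : List Piece | P k n l} ⊆ {l : List Piece | l.length ≤ n + 1} := by
    intro l hl
    have h1 := hl.1
    have h2 := length_le_sum k (Nat.one_le_iff_ne_zero.mpr (NeZero.ne k)) l
    simp only [Set.mem_setOf_eq]
    omega
  exact ((List.finite_length_le Piece (n + 1)).subset hsub).to_subtype

lemma concat_eq_concat {α : Type*} {l l' : List α} {a b : α}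
    (h : l ++ [a] = l' ++ [b]) : l = l' ∧ a = b := by
  have := List.append_inj' h rfl
  simpa using this

/-- The base-case bijection `Fin (n+1) → tilings`. -/
def baseFun (n : ℕ) (j : Fin (n + 1)) : List Piece :=
  List.replicate j Piece.white ++ Piece.black :: List.replicate (n - j) Piece.white

lemma P_baseFun (k n : ℕ) (hn : n < k) (j : Fin (n + 1)) : P k n (baseFun n j) := by
  refine ⟨?_, ?_, List.replicate j Piece.white, List.replicate (n - j) Piece.white,
      rfl, ?_⟩
  · simp only [baseFun, List.map_append, List.map_cons, List.sum_append, List.sum_cons,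
      List.map_replicate, List.sum_replicate, pieceLen, smul_eq_mul, mul_one]
    omega
  · simp [baseFun, List.count_replicate]
  · simp only [List.map_replicate, List.sum_replicate, smul_eq_mul, pieceLen, mul_one]
    omega

lemma takeWhile_repl (j : ℕ) (r : List Piece) :
    (List.replicate j Piece.white ++ Piece.black :: r).takeWhile
      (fun p => p != Piece.black) = List.replicate j Piece.white := by
  induction j with
  | zero => simp
  | succ j ih => simp [List.replicate_succ, List.takeWhile_cons, ih]

lemma card_base (k n : ℕ) (hk : 2 ≤ k) (hn : n < k) :
    Nat.card {l : List Piece // P k n l} = n + 1 := by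
  have : NeZero k := ⟨by omega⟩
  have hbij : Function.Bijective
      (fun j : Fin (n + 1) =>
        (⟨baseFun n j, P_baseFun k n hn j⟩ : {l : List Piece // P k n l})) := by
    constructor
    · intro j j' h
      have h' : baseFun n j = baseFun n j' := congrArg Subtype.val h
      have := congrArg (fun l => (l.takeWhile (fun p => p != Piece.black)).length) h'
      simp only [baseFun, takeWhile_repl, List.length_replicate] at this
      exact Fin.ext this
    · rintro ⟨l, hsum, hcount, l₁, l₂, rfl, hlt⟩
      -- no gray piece appears
      have hng : Piece.gray ∉ l₁ ++ Piece.black :: l₂ := by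
        intro hg
        obtain ⟨a, b, hab⟩ := List.append_of_mem hg
        have hb : Piece.black ∈ l₁ ++ Piece.black :: l₂ := by simp
        rw [hab] at hb hsum
        simp only [List.map_append, List.map_cons, List.sum_append, List.sum_cons,
          pieceLen] at hsum
        have hb' : Piece.black ∈ a ∨ Piece.black ∈ b := by
          rcases List.mem_append.mp hb with h | h
          · exact Or.inl h
          · rcases List.mem_cons.mp h with h | h
            · exact absurd h (by simp)
            · exact Or.inr h
        have : 1 ≤ (a.map (pieceLen k)).sum + (b.map (pieceLen k)).sum := by
          rcases hb' with h | h
          · have := List.single_le_sum (l := a.map (pieceLen k)) (by simp)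
              (pieceLen k Piece.black) (List.mem_map_of_mem h)
            simp [pieceLen] at this; omega
          · have := List.single_le_sum (l := b.map (pieceLen k)) (by simp)
              (pieceLen k Piece.black) (List.mem_map_of_mem h)
            simp [pieceLen] at this; omega
        omega
      have hcount' : Piece.black ∉ l₁ ∧ Piece.black ∉ l₂ := by
        simp only [List.count_append, List.count_cons_self] at hcount
        constructor <;> intro h <;>
          [have := List.count_pos_iff.mpr h; have := List.count_pos_iff.mpr h] <;> omega
      have hw₁ : ∀ x ∈ l₁, x = Piece.white := by
        intro x hx
        cases x with
        | white => rfl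
        | black => exact absurd hx hcount'.1
        | gray => exact absurd (by simp [hx]) hng
      have hw₂ : ∀ x ∈ l₂, x = Piece.white := by
        intro x hx
        cases x with
        | white => rfl
        | black => exact absurd hx hcount'.2
        | gray => exact absurd (by simp [hx]) hng
      have h₁ : l₁ = List.replicate l₁.length Piece.white := List.eq_replicate_of_mem hw₁
      have h₂ : l₂ = List.replicate l₂.length Piece.white := List.eq_replicate_of_mem hw₂
      have hs₁ : (l₁.map (pieceLen k)).sum = l₁.length := by
        rw [h₁]; simp [pieceLen]
      have hs₂ : (l₂.map (pieceLen k)).sum = l₂.length := by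
        rw [h₂]; simp [pieceLen]
      simp only [List.map_append, List.map_cons, List.sum_append, List.sum_cons,
        pieceLen] at hsum
      have hj : l₁.length ≤ n := by omega
      refine ⟨⟨l₁.length, by omega⟩, Subtype.ext ?_⟩
      show List.replicate l₁.length Piece.white ++
          Piece.black :: List.replicate (n - l₁.length) Piece.white =
          l₁ ++ Piece.black :: l₂
      conv_rhs => rw [h₁, h₂]
      rw [show n - l₁.length = l₂.length by omega]
  rw [Nat.card_congr (Equiv.ofBijective _ hbij).symm, Nat.card_eq_fintype_card,
    Fintype.card_fin]

lemma P_white {k n : ℕ} {l : List Piece} (hn : 1 ≤ n) (h : P k (n - 1) l) :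
    P k n (l ++ [Piece.white]) := by
  obtain ⟨hsum, hcount, l₁, l₂, rfl, hlt⟩ := h
  refine ⟨?_, ?_, l₁, l₂ ++ [Piece.white], by simp, hlt⟩
  · simp only [List.map_append, List.sum_append, List.map_cons, List.sum_cons,
      List.map_nil, List.sum_nil, pieceLen] at hsum ⊢
    omega
  · simp only [List.count_append] at hcount ⊢
    simpa using hcount

lemma P_gray {k n : ℕ} {l : List Piece} (hn : k ≤ n) (h : P k (n - k) l) :
    P k n (l ++ [Piece.gray]) := by
  obtain ⟨hsum, hcount, l₁, l₂, rfl, hlt⟩ := h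
  refine ⟨?_, ?_, l₁, l₂ ++ [Piece.gray], by simp, hlt⟩
  · simp only [List.map_append, List.sum_append, List.map_cons, List.sum_cons,
      List.map_nil, List.sum_nil, pieceLen] at hsum ⊢
    omega
  · simp only [List.count_append] at hcount ⊢
    simpa using hcount

def stepFun (k n : ℕ) (hk : 2 ≤ k) (hn : k ≤ n) :
    {l : List Piece // P k (n - 1) l} ⊕ {l : List Piece // P k (n - k) l} →
      {l : List Piece // P k n l}
  | .inl ⟨l, h⟩ => ⟨l ++ [Piece.white], P_white (by omega) h⟩
  | .inr ⟨l, h⟩ => ⟨l ++ [Piece.gray], P_gray hn h⟩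

lemma card_step (k n : ℕ) (hk : 2 ≤ k) (hn : k ≤ n) :
    Nat.card {l : List Piece // P k n l} =
      Nat.card {l : List Piece // P k (n - 1) l} +
        Nat.card {l : List Piece // P k (n - k) l} := by
  have : NeZero k := ⟨by omega⟩
  have hbij : Function.Bijective (stepFun k n hk hn) := by
    constructor
    · rintro (⟨l, h⟩ | ⟨l, h⟩) (⟨l', h'⟩ | ⟨l', h'⟩) heq <;>
        simp only [stepFun, Subtype.mk.injEq] at heq
      · have := (concat_eq_concat heq).1; subst this; rfl
      · exact absurd (concat_eq_concat heq).2 (by simp)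
      · exact absurd (concat_eq_concat heq).2 (by simp)
      · have := (concat_eq_concat heq).1; subst this; rfl
    · rintro ⟨l, hsum, hcount, l₁, l₂, heq, hlt⟩
      rcases l.eq_nil_or_concat' with rfl | ⟨L, x, rfl⟩
      · simp at hsum
      have hxb : x ≠ Piece.black := by
        rintro rfl
        rcases l₂.eq_nil_or_concat' with rfl | ⟨c, y, rfl⟩
        · obtain ⟨hL, -⟩ := concat_eq_concat heq
          subst hL
          simp only [List.map_append, List.sum_append, List.map_cons, List.sum_cons,
            List.map_nil, List.sum_nil, pieceLen] at hsum
          omega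
        · have heq' : L ++ [Piece.black] = (l₁ ++ Piece.black :: c) ++ [y] := by
            simpa using heq
          obtain ⟨-, rfl⟩ := concat_eq_concat heq'
          rw [heq] at hcount
          simp [List.count_append] at hcount
          omega
      obtain ⟨c, rfl, hLeq⟩ : ∃ c, l₂ = c ++ [x] ∧ L = l₁ ++ Piece.black :: c := by
        rcases l₂.eq_nil_or_concat' with rfl | ⟨c, y, rfl⟩
        · exact absurd (concat_eq_concat heq).2 hxb
        · have heq' : L ++ [x] = (l₁ ++ Piece.black :: c) ++ [y] := by simpa using heq
          obtain ⟨h1, h2⟩ := concat_eq_concat heq'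
          exact ⟨c, by rw [h2], h1⟩
      have hcountL : L.count Piece.black = 1 := by
        rw [List.count_append] at hcount
        simpa [List.count_singleton, hxb] using hcount
      have hsumL : (L.map (pieceLen k)).sum + pieceLen k x = n + 1 := by
        simp only [List.map_append, List.sum_append, List.map_cons, List.sum_cons,
          List.map_nil, List.sum_nil] at hsum
        omega
      cases x with
      | black => exact absurd rfl hxb
      | white =>
          refine ⟨.inl ⟨L, ?_, hcountL, l₁, c, hLeq, hlt⟩, rfl⟩
          simp only [pieceLen] at hsumL
          omega
      | gray =>
          refine ⟨.inr ⟨L, ?_, hcountL, l₁, c, hLeq, hlt⟩, rfl⟩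
          simp only [pieceLen] at hsumL
          omega
  rw [Nat.card_congr (Equiv.ofBijective _ hbij).symm, Nat.card_sum]

end Stmt13Aux

theorem stmt13 (k n : ℕ) (hk : 2 ≤ k) :
    genFib k n = Nat.card {l : List Piece //
      (l.map (pieceLen k)).sum = n + 1 ∧
      l.count Piece.black = 1 ∧
      ∃ l₁ l₂, l = l₁ ++ Piece.black :: l₂ ∧ (l₁.map (pieceLen k)).sum < k} := by
  induction n using Nat.strong_induction_on with
  | _ n ih =>
    by_cases h : n < k
    · rw [genFib, dif_pos h]
      exact (Stmt13Aux.card_base k n hk h).symm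
    · rw [genFib, dif_neg h, dif_neg (by omega), ih (n - 1) (by omega),
        ih (n - k) (by omega)]
      exact (Stmt13Aux.card_step k n hk (by omega)).symm
end
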